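/- Let g₁,…,g_m, h₁,…,h_n ∈ ℝ[u₁,…,u_k] and let D = {u ∈ ℝᵏ : gᵢ(u) ≥ 0 for all i, hⱼ(u) = 0 for all j}. Suppose there exist N ∈ ℝ, SOS polynomials s₀,…,s_m, and arbitrary polynomials q₁,…,q_n with N − (u₁² + ⋯ + u_k²) = s₀ + Σᵢ sᵢ gᵢ + Σⱼ qⱼ hⱼ. If f ∈ ℝ[u₁,…,u_k] satisfies f(u) > 0 for every u ∈ D, then there exist SOS polynomials s₀,…,s_m and arbitrary polynomials p₁,…,p_n such that f = s₀ + Σᵢ₌₁^m sᵢ gᵢ + Σⱼ₌₁^n pⱼ hⱼ. -/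

import Mathlib

open MvPolynomial

/-- A real multivariate polynomial is a sum of squares. -/
def IsSOS {k : ℕ} (s : MvPolynomial (Fin k) ℝ) : Prop :=
  ∃ (r : ℕ) (p : Fin r → MvPolynomial (Fin k) ℝ), s = ∑ i, p i ^ 2
namespace Putinar
variable {k : ℕ}
abbrev A (k : ℕ) := MvPolynomial (Fin k) ℝ
theorem isSOS_zero : IsSOS (0 : A k) := ⟨0, ![], by simp⟩
theorem isSOS_sq (p : A k) : IsSOS (p ^ 2) := ⟨1, ![p], by simp⟩
theorem isSOS_one : IsSOS (1 : A k) := by simpa using isSOS_sq (1 : A k)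
theorem isSOS_add {a b : A k} (ha : IsSOS a) (hb : IsSOS b) : IsSOS (a + b) := by
  obtain ⟨r, p, rfl⟩ := ha
  obtain ⟨r', q, rfl⟩ := hb
  refine ⟨r + r', Fin.append p q, ?_⟩
  rw [Fin.sum_univ_add]
  simp [Fin.append_left, Fin.append_right]
theorem isSOS_sum {ι : Type*} (s : Finset ι) (F : ι → A k)
    (h : ∀ i ∈ s, IsSOS (F i)) : IsSOS (∑ i ∈ s, F i) := by
  classical
  induction s using Finset.induction_on with
  | empty => simpa using isSOS_zero
  | insert _ _ hni ih =>
    rw [Finset.sum_insert hni]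
    exact isSOS_add (h _ (Finset.mem_insert_self _ _))
      (ih fun i hi => h i (Finset.mem_insert_of_mem hi))
theorem isSOS_sq_mul {b : A k} (p : A k) (hb : IsSOS b) : IsSOS (p ^ 2 * b) := by
  obtain ⟨r, q, rfl⟩ := hb
  exact ⟨r, fun i => p * q i, by rw [Finset.mul_sum]; apply Finset.sum_congr rfl; intros; ring⟩
theorem isSOS_mul {a b : A k} (ha : IsSOS a) (hb : IsSOS b) : IsSOS (a * b) := by
  obtain ⟨r, p, rfl⟩ := ha
  rw [Finset.sum_mul]
  exact isSOS_sum _ _ fun i _ => isSOS_sq_mul _ hb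
theorem isSOS_const {c : ℝ} (hc : 0 ≤ c) : IsSOS (C c : A k) := by
  have : (C c : A k) = (C (Real.sqrt c)) ^ 2 := by
    rw [← C_pow, Real.sq_sqrt hc]
  rw [this]; exact isSOS_sq _
theorem isSOS_const_mul {c : ℝ} {a : A k} (hc : 0 ≤ c) (ha : IsSOS a) : IsSOS (C c * a) :=
  isSOS_mul (isSOS_const hc) ha
theorem eval_isSOS_nonneg {a : A k} (ha : IsSOS a) (u : Fin k → ℝ) : 0 ≤ eval u a := by
  obtain ⟨r, p, rfl⟩ := ha
  rw [map_sum]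
  exact Finset.sum_nonneg fun i _ => by rw [map_pow]; positivity

/-! ### Quadratic modules -/

def IsQM (S : Set (A k)) : Prop :=
  (1 : A k) ∈ S ∧ (∀ a ∈ S, ∀ b ∈ S, a + b ∈ S) ∧ (∀ (p : A k), ∀ a ∈ S, p ^ 2 * a ∈ S)

namespace IsQM

variable {S : Set (A k)} (hS : IsQM S)
include hS

theorem one_mem : (1 : A k) ∈ S := hS.1
theorem add_mem {a b : A k} (ha : a ∈ S) (hb : b ∈ S) : a + b ∈ S := hS.2.1 a ha b hb
theorem sq_mul_mem (p : A k) {a : A k} (ha : a ∈ S) : p ^ 2 * a ∈ S := hS.2.2 p a ha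
theorem zero_mem : (0 : A k) ∈ S := by
  simpa using hS.sq_mul_mem 0 hS.one_mem
theorem sq_mem (p : A k) : p ^ 2 ∈ S := by simpa using hS.sq_mul_mem p hS.one_mem

theorem sum_mem {ι : Type*} (s : Finset ι) (F : ι → A k)
    (h : ∀ i ∈ s, F i ∈ S) : (∑ i ∈ s, F i) ∈ S := by
  classical
  induction s using Finset.induction_on with
  | empty => simpa using hS.zero_mem
  | insert _ _ hni ih =>
    rw [Finset.sum_insert hni]
    exact hS.add_mem (h _ (Finset.mem_insert_self _ _))
      (ih fun i hi => h i (Finset.mem_insert_of_mem hi))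

theorem sos_mul_mem {σ a : A k} (hσ : IsSOS σ) (ha : a ∈ S) : σ * a ∈ S := by
  obtain ⟨r, p, rfl⟩ := hσ
  rw [Finset.sum_mul]
  exact hS.sum_mem _ _ fun i _ => hS.sq_mul_mem _ ha

theorem sos_mem {σ : A k} (hσ : IsSOS σ) : σ ∈ S := by
  simpa using hS.sos_mul_mem hσ hS.one_mem

theorem const_mul_mem {c : ℝ} {a : A k} (hc : 0 ≤ c) (ha : a ∈ S) : C c * a ∈ S :=
  hS.sos_mul_mem (isSOS_const hc) ha

theorem const_mem {c : ℝ} (hc : 0 ≤ c) : (C c : A k) ∈ S := hS.sos_mem (isSOS_const hc)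

theorem neg_const_not_mem (hproper : (-1 : A k) ∉ S) {c : ℝ} (hc : c < 0) :
    (C c : A k) ∉ S := by
  intro hmem
  have hcpos : (0:ℝ) < -c := by linarith
  have h1 : (C ((-c)⁻¹) : A k) * C c ∈ S := hS.const_mul_mem (by positivity) hmem
  rw [← C_mul] at h1
  have h2 : (-c)⁻¹ * c = -1 := by rw [inv_neg, neg_mul, inv_mul_cancel₀ (ne_of_lt hc)]
  rw [h2] at h1
  simp only [map_neg, C_1] at h1
  exact hproper h1

/-- Adding a nonnegative constant keeps membership. -/
theorem add_const_mem {a : A k} {c : ℝ} (hc : 0 ≤ c) (ha : a ∈ S) : C c + a ∈ S :=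
  hS.add_mem (hS.const_mem hc) ha

end IsQM

/-! ### The concrete quadratic module -/

variable {m n : ℕ} (g : Fin m → A k) (h : Fin n → A k)

def Mset : Set (A k) :=
  {p | ∃ (s₀ : A k) (s : Fin m → A k) (q : Fin n → A k),
    IsSOS s₀ ∧ (∀ i, IsSOS (s i)) ∧ p = s₀ + ∑ i, s i * g i + ∑ j, q j * h j}

theorem Mset_isQM : IsQM (Mset g h) := by
  refine ⟨⟨1, 0, 0, isSOS_one, fun i => isSOS_zero, by simp⟩, ?_, ?_⟩
  · rintro a ⟨s₀, s, q, hs₀, hs, rfl⟩ b ⟨t₀, t, r, ht₀, ht, rfl⟩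
    refine ⟨s₀ + t₀, s + t, q + r, isSOS_add hs₀ ht₀, fun i => isSOS_add (hs i) (ht i), ?_⟩
    simp only [Pi.add_apply, add_mul, Finset.sum_add_distrib]
    ring
  · rintro p a ⟨s₀, s, q, hs₀, hs, rfl⟩
    refine ⟨p ^ 2 * s₀, fun i => p ^ 2 * s i, fun j => p ^ 2 * q j,
      isSOS_sq_mul p hs₀, fun i => isSOS_sq_mul p (hs i), ?_⟩
    rw [mul_add, mul_add, Finset.mul_sum, Finset.mul_sum]
    refine congrArg₂ (· + ·) ?_ ?_
    · refine congrArg₂ (· + ·) rfl ?_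
      exact Finset.sum_congr rfl fun i _ => by ring
    · exact Finset.sum_congr rfl fun j _ => by ring

theorem g_mem_Mset (i : Fin m) : g i ∈ Mset g h := by
  classical
  refine ⟨0, fun i' => if i' = i then 1 else 0, 0, isSOS_zero,
    fun i' => by by_cases hi : i' = i <;> simp [hi, isSOS_one, isSOS_zero], ?_⟩
  simp [Finset.sum_ite_eq', ite_mul]

theorem h_mem_Mset (j : Fin n) : h j ∈ Mset g h := by
  classical
  refine ⟨0, 0, fun j' => if j' = j then 1 else 0, isSOS_zero, fun i' => isSOS_zero, ?_⟩
  simp [Finset.sum_ite_eq', ite_mul]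

theorem neg_h_mem_Mset (j : Fin n) : -h j ∈ Mset g h := by
  classical
  refine ⟨0, 0, fun j' => if j' = j then -1 else 0, isSOS_zero, fun i' => isSOS_zero, ?_⟩
  simp [Finset.sum_ite_eq', ite_mul]


/-! ### Archimedean property -/

theorem C_inv_mul {c : ℝ} (hc : c ≠ 0) : (C c⁻¹ : A k) * C c = 1 := by
  rw [← C_mul, inv_mul_cancel₀ hc, C_1]

theorem two_eq_C : ((2 : A k)) = C (2:ℝ) := (map_ofNat C 2).symm
theorem four_eq_C : ((4 : A k)) = C (4:ℝ) := (map_ofNat C 4).symm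

section Arch

variable {S : Set (A k)} (hS : IsQM S)

/-- Bounded elements. -/
def BddSet (S : Set (A k)) : Set (A k) := {p | ∃ N : ℝ, C N - p ∈ S ∧ C N + p ∈ S}

include hS

theorem bdd_bump {p : A k} {N N' : ℝ} (hN : C N - p ∈ S) (hle : N ≤ N') : C N' - p ∈ S := by
  have : (C N' - p : A k) = C (N' - N) + (C N - p) := by rw [map_sub]; ring
  rw [this]
  exact hS.add_mem (hS.const_mem (by linarith)) hN

theorem bdd_bump' {p : A k} {N N' : ℝ} (hN : C N + p ∈ S) (hle : N ≤ N') : C N' + p ∈ S := by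
  have : (C N' + p : A k) = C (N' - N) + (C N + p) := by rw [map_sub]; ring
  rw [this]
  exact hS.add_mem (hS.const_mem (by linarith)) hN

theorem bdd_const (c : ℝ) : (C c : A k) ∈ BddSet S := by
  refine ⟨|c|, ?_, ?_⟩
  · rw [← map_sub]
    exact hS.const_mem (by rw [sub_nonneg]; exact le_abs_self c)
  · rw [← map_add]
    exact hS.const_mem (by have := neg_abs_le c; linarith)

theorem bdd_add {p q : A k} (hp : p ∈ BddSet S) (hq : q ∈ BddSet S) :
    p + q ∈ BddSet S := by
  obtain ⟨N, hN1, hN2⟩ := hp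
  obtain ⟨N', hN'1, hN'2⟩ := hq
  refine ⟨N + N', ?_, ?_⟩
  · have : (C (N + N') - (p + q) : A k) = (C N - p) + (C N' - q) := by rw [map_add]; ring
    rw [this]; exact hS.add_mem hN1 hN'1
  · have : (C (N + N') + (p + q) : A k) = (C N + p) + (C N' + q) := by rw [map_add]; ring
    rw [this]; exact hS.add_mem hN2 hN'2

theorem bdd_neg {p : A k} (hp : p ∈ BddSet S) : -p ∈ BddSet S := by
  obtain ⟨N, hN1, hN2⟩ := hp
  exact ⟨N, by simpa [sub_neg_eq_add] using hN2, by simpa [← sub_eq_add_neg] using hN1⟩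

theorem bdd_sq {p : A k} (hp : p ∈ BddSet S) : p ^ 2 ∈ BddSet S := by
  obtain ⟨N₀, hN1, hN2⟩ := hp
  set N := max N₀ 1 with hNdef
  have hN1' : C N - p ∈ S := bdd_bump hS hN1 (le_max_left _ _)
  have hN2' : C N + p ∈ S := bdd_bump' hS hN2 (le_max_left _ _)
  have hNpos : (0:ℝ) < N := lt_of_lt_of_le one_pos (le_max_right _ _)
  refine ⟨N ^ 2, ?_, ?_⟩
  · have h3 : (C ((2*N)⁻¹) : A k) * (2 * C N) = 1 := by
      have e : ((2 : A k) * C N) = C (2 * N) := by rw [C_mul, two_eq_C]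
      rw [e]; exact C_inv_mul (by positivity)
    have key : (C (N ^ 2) - p ^ 2 : A k) =
        C ((2*N)⁻¹) * ((C N + p) ^ 2 * (C N - p) + (C N - p) ^ 2 * (C N + p)) := by
      rw [map_pow]
      linear_combination (-(((C N : A k)) ^ 2 - p ^ 2)) * h3
    rw [key]
    exact hS.const_mul_mem (by positivity)
      (hS.add_mem (hS.sq_mul_mem _ hN1') (hS.sq_mul_mem _ hN2'))
  · have : (C (N ^ 2) + p ^ 2 : A k) = C (N ^ 2) + p ^ 2 * 1 := by ring
    rw [this]
    exact hS.add_mem (hS.const_mem (by positivity)) (hS.sq_mul_mem _ hS.one_mem)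

theorem bdd_mul {p q : A k} (hp : p ∈ BddSet S) (hq : q ∈ BddSet S) :
    p * q ∈ BddSet S := by
  have h1 : (p + q) ^ 2 ∈ BddSet S := bdd_sq hS (bdd_add hS hp hq)
  have h2 : (p + -q) ^ 2 ∈ BddSet S := bdd_sq hS (bdd_add hS hp (bdd_neg hS hq))
  have h3 : (p + q) ^ 2 + -((p + -q) ^ 2) ∈ BddSet S := bdd_add hS h1 (bdd_neg hS h2)
  obtain ⟨N, hN1, hN2⟩ := h3
  have h4 : (C ((4:ℝ)⁻¹) : A k) * 4 = 1 := by
    rw [four_eq_C]; exact C_inv_mul (by norm_num)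
  refine ⟨(4:ℝ)⁻¹ * N, ?_, ?_⟩
  · have key : (C ((4:ℝ)⁻¹ * N) - p * q : A k) =
        C ((4:ℝ)⁻¹) * (C N - ((p + q) ^ 2 + -((p + -q) ^ 2))) := by
      rw [C_mul]
      linear_combination (p * q) * h4
    rw [key]
    exact hS.const_mul_mem (by norm_num) hN1
  · have key : (C ((4:ℝ)⁻¹ * N) + p * q : A k) =
        C ((4:ℝ)⁻¹) * (C N + ((p + q) ^ 2 + -((p + -q) ^ 2))) := by
      rw [C_mul]
      linear_combination (-(p * q)) * h4
    rw [key]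
    exact hS.const_mul_mem (by norm_num) hN2

theorem bdd_X (hball : ∃ N₀ : ℝ, C N₀ - ∑ j : Fin k, X j ^ 2 ∈ S) (i : Fin k) :
    (X i : A k) ∈ BddSet S := by
  classical
  obtain ⟨N₀, hball⟩ := hball
  have hXsq : (C N₀ - X i ^ 2 : A k) ∈ S := by
    have hsum : (X i ^ 2 : A k) + ∑ j ∈ Finset.univ.erase i, X j ^ 2 = ∑ j, X j ^ 2 :=
      Finset.add_sum_erase _ _ (Finset.mem_univ i)
    have e : (C N₀ - X i ^ 2 : A k) =
        (C N₀ - ∑ j, X j ^ 2) + ∑ j ∈ Finset.univ.erase i, X j ^ 2 := by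
      rw [← hsum]; ring
    rw [e]
    exact hS.add_mem hball (hS.sum_mem _ _ fun j _ => hS.sq_mem _)
  have h2 : (C ((2:ℝ)⁻¹) : A k) * 2 = 1 := by
    rw [two_eq_C]; exact C_inv_mul (by norm_num)
  refine ⟨(2:ℝ)⁻¹ * (N₀ + 1), ?_, ?_⟩
  · have key : (C ((2:ℝ)⁻¹ * (N₀ + 1)) - X i : A k) =
        C ((2:ℝ)⁻¹) * ((C N₀ - X i ^ 2) + (X i - 1) ^ 2) := by
      rw [C_mul, map_add, C_1]
      linear_combination ((X i : A k)) * h2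
    rw [key]
    exact hS.const_mul_mem (by norm_num) (hS.add_mem hXsq (hS.sq_mem _))
  · have key : (C ((2:ℝ)⁻¹ * (N₀ + 1)) + X i : A k) =
        C ((2:ℝ)⁻¹) * ((C N₀ - X i ^ 2) + (X i + 1) ^ 2) := by
      rw [C_mul, map_add, C_1]
      linear_combination (-(X i : A k)) * h2
    rw [key]
    exact hS.const_mul_mem (by norm_num) (hS.add_mem hXsq (hS.sq_mem _))

theorem arch (hball : ∃ N₀ : ℝ, C N₀ - ∑ j : Fin k, X j ^ 2 ∈ S) (p : A k) :
    ∃ N : ℝ, C N - p ∈ S ∧ C N + p ∈ S := by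
  have hmem : p ∈ BddSet S := by
    induction p using MvPolynomial.induction_on with
    | C a => exact bdd_const hS a
    | add p q hp hq => exact bdd_add hS hp hq
    | mul_X p i hp => exact bdd_mul hS hp (bdd_X hS hball i)
  exact hmem

end Arch

/-! ### The shrinking lemma -/

section Shrink

variable {S : Set (A k)} (hS : IsQM S)
include hS

theorem mem_shift {p : A k} {a b : ℝ} (hmem : p + C a ∈ S) (hab : a ≤ b) :
    p + C b ∈ S := by
  have e : (p + C b : A k) = (p + C a) + C (b - a) := by rw [map_sub]; ring
  rw [e]
  exact hS.add_mem hmem (hS.const_mem (by linarith))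

theorem shrink_step {σ q f' : A k} (hσ : IsSOS σ) (hq : q ∈ S)
    (hrel : σ * f' = 1 + q) {kk lam t : ℝ} (hkσ : C kk - σ ∈ S) (hkq : C kk - q ∈ S)
    (hlam : 0 < lam) (ht : 0 < t) (htk : t * (1 + kk + lam * kk) ≤ 2 * lam)
    (hmem : f' + C lam ∈ S) : f' + C (lam - 2 * t) ∈ S := by
  have key : (f' + C (lam - 2 * t) : A k) =
      (1 - C t * σ) ^ 2 * (f' + C lam) + C (2 * t) * q + C (t ^ 2) * (σ * (C kk - q)) +
        C (lam * t ^ 2) * (σ * (C kk - σ)) +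
        C (t * (2 * lam - t * (1 + kk + lam * kk))) * σ := by
    simp only [map_sub, map_add, map_mul, map_pow, map_one, map_ofNat]
    linear_combination (2 * C t - (C t) ^ 2 * σ) * hrel
  rw [key]
  refine hS.add_mem (hS.add_mem (hS.add_mem (hS.add_mem ?_ ?_) ?_) ?_) ?_
  · exact hS.sq_mul_mem _ hmem
  · exact hS.const_mul_mem (by linarith) hq
  · exact hS.const_mul_mem (by positivity) (hS.sos_mul_mem hσ hkq)
  · exact hS.const_mul_mem (by positivity) (hS.sos_mul_mem hσ hkσ)
  · have h0 : 0 ≤ 2 * lam - t * (1 + kk + lam * kk) := by linarith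
    exact hS.const_mul_mem (by positivity) (hS.sos_mem hσ)

theorem eps_mem (hball : ∃ N₀ : ℝ, C N₀ - ∑ j : Fin k, X j ^ 2 ∈ S)
    {σ q f' : A k} (hσ : IsSOS σ) (hq : q ∈ S) (hrel : σ * f' = 1 + q)
    {ε : ℝ} (hε : 0 < ε) : f' + C ε ∈ S := by
  obtain ⟨K₁, hK₁, -⟩ := arch hS hball σ
  obtain ⟨K₂, hK₂, -⟩ := arch hS hball q
  set kk := max (max K₁ K₂) 1 with hkk
  have hk1 : (1:ℝ) ≤ kk := le_max_right _ _
  have hkσ : C kk - σ ∈ S := bdd_bump hS hK₁ (le_trans (le_max_left _ _) (le_max_left _ _))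
  have hkq : C kk - q ∈ S := bdd_bump hS hK₂ (le_trans (le_max_right _ _) (le_max_left _ _))
  obtain ⟨Λ, -, hΛ2⟩ := arch hS hball f'
  set lam₁ := max Λ 1 with hlam₁
  have hlam₁pos : (0:ℝ) < lam₁ := lt_of_lt_of_le one_pos (le_max_right _ _)
  have hmem₁ : f' + C lam₁ ∈ S := by
    have := bdd_bump' hS hΛ2 (le_max_left Λ 1)
    rwa [add_comm] at this
  have hden : (0:ℝ) < 1 + kk + lam₁ * kk := by nlinarith
  set δ := ε / (1 + kk + lam₁ * kk) with hδ
  have hδpos : 0 < δ := div_pos hε hden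
  have hδband : δ * (1 + kk + lam₁ * kk) = ε := div_mul_cancel₀ ε (ne_of_gt hden)
  have claim : ∀ nn : ℕ, (f' + C ε ∈ S) ∨
      (∃ lam : ℝ, ε < lam ∧ lam ≤ lam₁ - nn * (2 * δ) ∧ f' + C lam ∈ S) := by
    intro nn
    induction nn with
    | zero =>
      by_cases hle : lam₁ ≤ ε
      · exact Or.inl (mem_shift hS hmem₁ hle)
      · exact Or.inr ⟨lam₁, lt_of_not_ge hle, by simp, hmem₁⟩
    | succ nn ih =>
      rcases ih with hdone | ⟨lam, hεlam, hlamle, hmem⟩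
      · exact Or.inl hdone
      have hlampos : 0 < lam := lt_trans hε hεlam
      have hlamle₁ : lam ≤ lam₁ := by
        have : (0:ℝ) ≤ nn * (2 * δ) := by positivity
        linarith
      have hstep : f' + C (lam - 2 * δ) ∈ S := by
        apply shrink_step hS hσ hq hrel hkσ hkq hlampos hδpos ?_ hmem
        have hkk0 : (0:ℝ) < kk := lt_of_lt_of_le one_pos hk1
        have hlk : lam * kk ≤ lam₁ * kk := mul_le_mul_of_nonneg_right hlamle₁ (le_of_lt hkk0)
        have hmono : δ * (1 + kk + lam * kk) ≤ δ * (1 + kk + lam₁ * kk) :=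
          mul_le_mul_of_nonneg_left (by linarith) (le_of_lt hδpos)
        nlinarith
      by_cases hle : lam - 2 * δ ≤ ε
      · exact Or.inl (mem_shift hS hstep hle)
      · refine Or.inr ⟨lam - 2 * δ, lt_of_not_ge hle, ?_, hstep⟩
        push_cast
        linarith
  obtain ⟨nn, hnn⟩ := exists_nat_gt ((lam₁ - ε) / (2 * δ))
  rcases claim nn with hdone | ⟨lam, hεlam, hlamle, -⟩
  · exact hdone
  · exfalso
    have h2δ : (0:ℝ) < 2 * δ := by linarith
    have : lam₁ - ε < nn * (2 * δ) := by
      rw [div_lt_iff₀ h2δ] at hnn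
      linarith
    linarith
end Shrink

/-! ### Maximal proper quadratic modules are semiorderings -/

section Semi

theorem exists_maximal_proper {M₀ : Set (A k)} (hM₀ : IsQM M₀) (hp : (-1 : A k) ∉ M₀) :
    ∃ Q : Set (A k), IsQM Q ∧ M₀ ⊆ Q ∧ (-1 : A k) ∉ Q ∧
      ∀ Q' : Set (A k), IsQM Q' → (-1 : A k) ∉ Q' → Q ⊆ Q' → Q' = Q := by
  set 𝒮 : Set (Set (A k)) := {Q | IsQM Q ∧ (-1 : A k) ∉ Q} with h𝒮
  have hzorn := zorn_subset_nonempty 𝒮 ?_ M₀ ⟨hM₀, hp⟩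
  · obtain ⟨Q, hM₀Q, ⟨hQqm, hQp⟩, hmax⟩ := hzorn
    refine ⟨Q, hQqm, hM₀Q, hQp, fun Q' hQ' hQ'p hQQ' => ?_⟩
    exact Set.Subset.antisymm (hmax ⟨hQ', hQ'p⟩ hQQ') hQQ'
  · rintro c hc𝒮 hchain ⟨Q₀, hQ₀⟩
    refine ⟨⋃₀ c, ⟨⟨?_, ?_, ?_⟩, ?_⟩, fun s hs => Set.subset_sUnion_of_mem hs⟩
    · exact ⟨Q₀, hQ₀, (hc𝒮 hQ₀).1.one_mem⟩
    · rintro a ⟨Qa, hQa, haQ⟩ b ⟨Qb, hQb, hbQ⟩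
      rcases hchain.total hQa hQb with hab | hba
      · exact ⟨Qb, hQb, (hc𝒮 hQb).1.add_mem (hab haQ) hbQ⟩
      · exact ⟨Qa, hQa, (hc𝒮 hQa).1.add_mem haQ (hba hbQ)⟩
    · rintro p a ⟨Qa, hQa, haQ⟩
      exact ⟨Qa, hQa, (hc𝒮 hQa).1.sq_mul_mem p haQ⟩
    · rintro ⟨Qa, hQa, haQ⟩
      exact (hc𝒮 hQa).2 haQ

theorem maximal_semiordering {Q : Set (A k)} (hQ : IsQM Q) (hp : (-1 : A k) ∉ Q)
    (hmax : ∀ Q' : Set (A k), IsQM Q' → (-1 : A k) ∉ Q' → Q ⊆ Q' → Q' = Q) (a : A k) :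
    a ∈ Q ∨ -a ∈ Q := by
  by_contra hcon
  push_neg at hcon
  obtain ⟨ha, hna⟩ := hcon
  -- the quadratic module generated by Q and b
  have key : ∀ b : A k, b ∉ Q → ∃ q ∈ Q, ∃ σ, IsSOS σ ∧ (-1 : A k) = q + σ * b := by
    intro b hb
    set Q₁ : Set (A k) := {x | ∃ q ∈ Q, ∃ σ, IsSOS σ ∧ x = q + σ * b} with hQ₁def
    have hQ₁qm : IsQM Q₁ := by
      refine ⟨⟨1, hQ.one_mem, 0, isSOS_zero, by ring⟩, ?_, ?_⟩
      · rintro x ⟨qx, hqx, σx, hσx, rfl⟩ y ⟨qy, hqy, σy, hσy, rfl⟩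
        exact ⟨qx + qy, hQ.add_mem hqx hqy, σx + σy, isSOS_add hσx hσy, by ring⟩
      · rintro p x ⟨qx, hqx, σx, hσx, rfl⟩
        exact ⟨p ^ 2 * qx, hQ.sq_mul_mem p hqx, p ^ 2 * σx, isSOS_sq_mul p hσx, by ring⟩
    have hQQ₁ : Q ⊆ Q₁ := fun x hx => ⟨x, hx, 0, isSOS_zero, by ring⟩
    have hbQ₁ : b ∈ Q₁ := ⟨0, hQ.zero_mem, 1, isSOS_one, by ring⟩
    by_cases hQ₁p : (-1 : A k) ∈ Q₁
    · obtain ⟨q, hq, σ, hσ, hid⟩ := hQ₁p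
      exact ⟨q, hq, σ, hσ, hid⟩
    · exfalso
      have := hmax Q₁ hQ₁qm hQ₁p hQQ₁
      rw [this] at hbQ₁
      exact hb hbQ₁
  obtain ⟨q₁, hq₁, σ₁, hσ₁, eq1⟩ := key a ha
  obtain ⟨q₂, hq₂, σ₂, hσ₂, eq2⟩ := key (-a) hna
  have hsum : -(σ₁ + σ₂) = σ₂ * q₁ + σ₁ * q₂ := by
    linear_combination σ₂ * eq1 + σ₁ * eq2
  have hQneg : -(σ₁ + σ₂) ∈ Q := by
    rw [hsum]
    exact hQ.add_mem (hQ.sos_mul_mem hσ₂ hq₁) (hQ.sos_mul_mem hσ₁ hq₂)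
  have hnegσ₁ : -σ₁ ∈ Q := by
    have e : (-σ₁ : A k) = -(σ₁ + σ₂) + σ₂ := by ring
    rw [e]
    exact hQ.add_mem hQneg (hQ.sos_mem hσ₂)
  have h2 : (C ((2:ℝ)⁻¹) : A k) * 2 = 1 := by
    rw [two_eq_C]; exact C_inv_mul (by norm_num)
  have hσ₁a : σ₁ * a ∈ Q := by
    have e : σ₁ * a = ((a + 1) * C ((2:ℝ)⁻¹)) ^ 2 * σ₁ +
        ((a - 1) * C ((2:ℝ)⁻¹)) ^ 2 * (-σ₁) := by
      linear_combination (-(σ₁ * a) * (2 * C ((2:ℝ)⁻¹) + 1)) * h2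
    rw [e]
    exact hQ.add_mem (hQ.sq_mul_mem _ (hQ.sos_mem hσ₁)) (hQ.sq_mul_mem _ hnegσ₁)
  apply hp
  rw [eq1]
  exact hQ.add_mem hq₁ hσ₁a

end Semi

/-! ### The character associated to an archimedean semiordering -/

theorem le_of_eps {a b : ℝ} (h : ∀ ε : ℝ, 0 < ε → a ≤ b + ε) : a ≤ b := by
  by_contra hc
  have := h ((a - b)/2) (by linarith)
  linarith

section Char

noncomputable def alph (Q : Set (A k)) (p : A k) : ℝ := sInf {r : ℝ | C r - p ∈ Q}

variable {Q : Set (A k)} (hQ : IsQM Q) (hp : (-1 : A k) ∉ Q)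
    (hsemi : ∀ a : A k, a ∈ Q ∨ -a ∈ Q)
    (hball : ∃ N₀ : ℝ, C N₀ - ∑ j : Fin k, X j ^ 2 ∈ Q)

include hQ hp hball

theorem alph_set_nonempty (p : A k) : {r : ℝ | C r - p ∈ Q}.Nonempty := by
  obtain ⟨N, hN, -⟩ := arch hQ hball p
  exact ⟨N, hN⟩

theorem alph_set_bddBelow (p : A k) : BddBelow {r : ℝ | C r - p ∈ Q} := by
  obtain ⟨N, -, hN⟩ := arch hQ hball p
  refine ⟨-N, fun r hr => ?_⟩
  by_contra hlt
  push_neg at hlt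
  have hmem : (C (r + N) : A k) ∈ Q := by
    have e : (C (r + N) : A k) = (C r - p) + (C N + p) := by rw [map_add]; ring
    rw [e]; exact hQ.add_mem hr hN
  exact hQ.neg_const_not_mem hp (by linarith) hmem

theorem alph_le {p : A k} {r : ℝ} (h : C r - p ∈ Q) : alph Q p ≤ r :=
  csInf_le (alph_set_bddBelow hQ hp hball p) h

theorem alph_le_iff_rev {p : A k} {r : ℝ} (h : r < alph Q p) : C r - p ∉ Q :=
  fun hmem => absurd (alph_le hQ hp hball hmem) (not_le.mpr h)

theorem alph_add_eps (p : A k) {ε : ℝ} (hε : 0 < ε) : C (alph Q p + ε) - p ∈ Q := by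
  obtain ⟨r, hr, hrlt⟩ := exists_lt_of_csInf_lt (alph_set_nonempty hQ hp hball p)
    (show sInf {r : ℝ | C r - p ∈ Q} < alph Q p + ε by unfold alph; linarith)
  exact bdd_bump hQ hr (le_of_lt hrlt)

theorem alph_nonneg_of_mem {b : A k} (hb : b ∈ Q) : 0 ≤ alph Q b := by
  apply le_csInf (alph_set_nonempty hQ hp hball b)
  intro r hr
  by_contra hlt
  push_neg at hlt
  have hmem : (C r : A k) ∈ Q := by
    have e : (C r : A k) = (C r - b) + b := by ring
    rw [e]; exact hQ.add_mem hr hb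
  exact hQ.neg_const_not_mem hp hlt hmem

theorem alph_const (c : ℝ) : alph Q (C c) = c := by
  apply le_antisymm
  · exact alph_le hQ hp hball (by rw [sub_self]; exact hQ.zero_mem)
  · apply le_csInf (alph_set_nonempty hQ hp hball _)
    intro r hr
    by_contra hlt
    push_neg at hlt
    simp only [Set.mem_setOf_eq, ← map_sub] at hr
    exact hQ.neg_const_not_mem hp (by linarith) hr

theorem alph_subadd (p q : A k) : alph Q (p + q) ≤ alph Q p + alph Q q := by
  apply le_of_eps
  intro ε hε
  apply alph_le hQ hp hball
  have e : (C (alph Q p + alph Q q + ε) - (p + q) : A k) =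
      (C (alph Q p + ε/2) - p) + (C (alph Q q + ε/2) - q) := by
    rw [show alph Q p + alph Q q + ε = (alph Q p + ε/2) + (alph Q q + ε/2) by ring, map_add]
    ring
  rw [e]
  exact hQ.add_mem (alph_add_eps hQ hp hball p (by linarith))
    (alph_add_eps hQ hp hball q (by linarith))

include hsemi

theorem alph_neg (p : A k) : alph Q (-p) = - alph Q p := by
  apply le_antisymm
  · apply le_of_eps
    intro ε hε
    apply alph_le hQ hp hball
    have hnot : C (alph Q p - ε) - p ∉ Q := alph_le_iff_rev hQ hp hball (by linarith)
    rcases hsemi (C (alph Q p - ε) - p) with hmem | hmem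
    · exact absurd hmem hnot
    · have e : (C (-alph Q p + ε) - (-p) : A k) = -(C (alph Q p - ε) - p) := by
        rw [map_add, map_sub, map_neg]; ring
      rw [e]; exact hmem
  · by_contra hlt
    push_neg at hlt
    set ε := (-(alph Q p) - alph Q (-p)) / 3 with hεdef
    have hε : 0 < ε := by unfold ε; linarith
    have h1 : C (alph Q p + ε) - p ∈ Q := alph_add_eps hQ hp hball p hε
    have h2 : C (alph Q (-p) + ε) - (-p) ∈ Q := alph_add_eps hQ hp hball (-p) hε
    have hmem : (C (alph Q p + alph Q (-p) + 2*ε) : A k) ∈ Q := by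
      have e : (C (alph Q p + alph Q (-p) + 2*ε) : A k) =
          (C (alph Q p + ε) - p) + (C (alph Q (-p) + ε) - (-p)) := by
        rw [show alph Q p + alph Q (-p) + 2*ε = (alph Q p + ε) + (alph Q (-p) + ε) by ring,
          map_add]
        ring
      rw [e]; exact hQ.add_mem h1 h2
    refine hQ.neg_const_not_mem hp ?_ hmem
    unfold ε
    linarith

theorem alph_add (p q : A k) : alph Q (p + q) = alph Q p + alph Q q := by
  apply le_antisymm (alph_subadd hQ hp hball p q)
  have h1 : alph Q (-(p+q)) ≤ alph Q (-p) + alph Q (-q) := by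
    have e : (-(p+q) : A k) = -p + -q := by ring
    rw [e]; exact alph_subadd hQ hp hball _ _
  rw [alph_neg hQ hp hsemi hball, alph_neg hQ hp hsemi hball, alph_neg hQ hp hsemi hball] at h1
  linarith

omit hsemi in
theorem alph_Cmul_le {c : ℝ} (hc : 0 < c) (p : A k) :
    alph Q (C c * p) ≤ c * alph Q p := by
  apply le_of_eps
  intro ε hε
  apply alph_le hQ hp hball
  have e : (C (c * alph Q p + ε) - C c * p : A k) =
      C c * (C (alph Q p + ε / c) - p) := by
    rw [show c * alph Q p + ε = c * (alph Q p + ε / c) by field_simp, C_mul]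
    ring
  rw [e]
  exact hQ.const_mul_mem (le_of_lt hc) (alph_add_eps hQ hp hball p (by positivity))

omit hsemi in
theorem alph_Cmul_pos {c : ℝ} (hc : 0 < c) (p : A k) :
    alph Q (C c * p) = c * alph Q p := by
  apply le_antisymm (alph_Cmul_le hQ hp hball hc p)
  have h1 : alph Q (C c⁻¹ * (C c * p)) ≤ c⁻¹ * alph Q (C c * p) :=
    alph_Cmul_le hQ hp hball (by positivity) _
  have e : (C c⁻¹ * (C c * p) : A k) = p := by
    rw [← mul_assoc, ← C_mul, inv_mul_cancel₀ (ne_of_gt hc), C_1, one_mul]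
  rw [e] at h1
  have := mul_le_mul_of_nonneg_left h1 (le_of_lt hc)
  rw [← mul_assoc, mul_inv_cancel₀ (ne_of_gt hc), one_mul] at this
  linarith

theorem alph_Cmul (c : ℝ) (p : A k) : alph Q (C c * p) = c * alph Q p := by
  rcases lt_trichotomy c 0 with hc | hc | hc
  · have e : (C c * p : A k) = C (-c) * (-p) := by rw [map_neg]; ring
    rw [e, alph_Cmul_pos hQ hp hball (by linarith), alph_neg hQ hp hsemi hball]
    ring
  · subst hc
    simp only [map_zero, zero_mul]
    have := alph_const hQ hp hball (0:ℝ)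
    rw [map_zero] at this
    rw [this]
  · exact alph_Cmul_pos hQ hp hball hc p

theorem alph_zero_mul {p : A k} (hp0 : alph Q p = 0) (b : A k) {ε : ℝ} (hε : 0 < ε) :
    C ε - p * b ∈ Q := by
  set cpoly : A k := C (2⁻¹:ℝ) * ((b+1)^2 + b^2 + 1) with hcp
  obtain ⟨K₀, hK₀, -⟩ := arch hQ hball cpoly
  set K := max K₀ 1 with hKdef
  have hK : C K - cpoly ∈ Q := bdd_bump hQ hK₀ (le_max_left _ _)
  have hKpos : (0:ℝ) < K := lt_of_lt_of_le one_pos (le_max_right _ _)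
  set δ := ε / K with hδdef
  have hδpos : 0 < δ := div_pos hε hKpos
  have hδK : δ * K = ε := div_mul_cancel₀ ε (ne_of_gt hKpos)
  have h1 : C δ - p ∈ Q := by
    have := alph_add_eps hQ hp hball p hδpos
    rwa [hp0, zero_add] at this
  have h2 : C δ + p ∈ Q := by
    have hneg : alph Q (-p) = 0 := by rw [alph_neg hQ hp hsemi hball, hp0, neg_zero]
    have := alph_add_eps hQ hp hball (-p) hδpos
    rwa [hneg, zero_add, sub_neg_eq_add] at this
  have hεe : (C ε : A k) = C δ * C K := by rw [← C_mul, hδK]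
  have h2inv : (C ((2:ℝ)⁻¹) : A k) * 2 = 1 := by
    rw [two_eq_C]; exact C_inv_mul (by norm_num)
  have E : (C ε - p * b : A k) =
      C (2⁻¹:ℝ) * ((b+1)^2 * (C δ - p)) + C (2⁻¹:ℝ) * (b^2 * (C δ + p)) +
        C (2⁻¹:ℝ) * (C δ + p) + C δ * (C K - cpoly) := by
    rw [hcp]
    linear_combination hεe + (p * b) * h2inv
  rw [E]
  refine hQ.add_mem (hQ.add_mem (hQ.add_mem ?_ ?_) ?_) ?_
  · exact hQ.const_mul_mem (by norm_num) (hQ.sq_mul_mem _ h1)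
  · exact hQ.const_mul_mem (by norm_num) (hQ.sq_mul_mem _ h2)
  · exact hQ.const_mul_mem (by norm_num) h2
  · exact hQ.const_mul_mem (le_of_lt hδpos) hK

theorem alph_mul (p b : A k) : alph Q (p * b) = alph Q p * alph Q b := by
  set lam := alph Q p with hlam
  have hp' : alph Q (p - C lam) = 0 := by
    rw [sub_eq_add_neg, ← map_neg, alph_add hQ hp hsemi hball, alph_const hQ hp hball]
    ring
  have hzero : alph Q ((p - C lam) * b) = 0 := by
    apply le_antisymm
    · apply le_of_eps
      intro ε hε
      have := alph_le hQ hp hball (alph_zero_mul hQ hp hsemi hball hp' b hε)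
      linarith
    · have h2 : alph Q (-((p - C lam) * b)) ≤ 0 := by
        apply le_of_eps
        intro ε hε
        have hm := alph_zero_mul hQ hp hsemi hball hp' (-b) hε
        rw [mul_neg, sub_neg_eq_add] at hm
        have : (C ε + (p - C lam) * b : A k) = C ε - -((p - C lam) * b) := by ring
        rw [this] at hm
        have := alph_le hQ hp hball hm
        linarith
      rw [alph_neg hQ hp hsemi hball] at h2
      linarith
  have e : p * b = (p - C lam) * b + C lam * b := by ring
  rw [e, alph_add hQ hp hsemi hball, hzero, alph_Cmul hQ hp hsemi hball, zero_add, hlam]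

theorem alph_eval (p : A k) : alph Q p = eval (fun i => alph Q (X i)) p := by
  induction p using MvPolynomial.induction_on with
  | C a => rw [alph_const hQ hp hball, eval_C]
  | add p q hp1 hq1 => rw [alph_add hQ hp hsemi hball, map_add, hp1, hq1]
  | mul_X p i hp1 => rw [alph_mul hQ hp hsemi hball, map_mul, eval_X, hp1]

end Char

/-! ### Final assembly -/

section Main

variable {m n : ℕ} (g : Fin m → A k) (h : Fin n → A k)

theorem eval_Mset_nonneg {p : A k} (hp : p ∈ Mset g h) {u : Fin k → ℝ}
    (hg : ∀ i, 0 ≤ eval u (g i)) (hh : ∀ j, eval u (h j) = 0) : 0 ≤ eval u p := by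
  obtain ⟨s₀, s, q, hs₀, hs, rfl⟩ := hp
  simp only [map_add, map_sum, map_mul]
  have hz : ∀ j ∈ Finset.univ, eval u (q j) * eval u (h j) = 0 := by
    intro j _; rw [hh j, mul_zero]
  rw [Finset.sum_eq_zero hz, add_zero]
  exact add_nonneg (eval_isSOS_nonneg hs₀ u)
    (Finset.sum_nonneg fun i _ => mul_nonneg (eval_isSOS_nonneg (hs i) u) (hg i))

theorem mem_Mset_gen (b : A k) :
    IsQM {x : A k | ∃ q ∈ Mset g h, ∃ σ, IsSOS σ ∧ x = q + σ * b} := by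
  have hQ := Mset_isQM g h
  refine ⟨⟨1, hQ.one_mem, 0, isSOS_zero, by ring⟩, ?_, ?_⟩
  · rintro x ⟨qx, hqx, σx, hσx, rfl⟩ y ⟨qy, hqy, σy, hσy, rfl⟩
    exact ⟨qx + qy, hQ.add_mem hqx hqy, σx + σy, isSOS_add hσx hσy, by ring⟩
  · rintro p x ⟨qx, hqx, σx, hσx, rfl⟩
    exact ⟨p ^ 2 * qx, hQ.sq_mul_mem p hqx, p ^ 2 * σx, isSOS_sq_mul p hσx, by ring⟩

theorem main_mem
    (hball : ∃ N₀ : ℝ, C N₀ - ∑ j : Fin k, X j ^ 2 ∈ Mset g h)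
    (f : A k)
    (hf : ∀ u : Fin k → ℝ, (∀ i, 0 ≤ eval u (g i)) → (∀ j, eval u (h j) = 0) →
      0 < eval u f) : f ∈ Mset g h := by
  classical
  have hMqm := Mset_isQM g h
  set D : Set (Fin k → ℝ) :=
    {u | (∀ i, 0 ≤ eval u (g i)) ∧ (∀ j, eval u (h j) = 0)} with hD
  -- compactness of D
  have hDclosed : IsClosed D := by
    have : D = (⋂ i, {u : Fin k → ℝ | 0 ≤ eval u (g i)}) ∩
        (⋂ j, {u : Fin k → ℝ | eval u (h j) = 0}) := by
      ext u; simp [hD, Set.mem_iInter]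
    rw [this]
    exact IsClosed.inter
      (isClosed_iInter fun i => isClosed_le continuous_const (MvPolynomial.continuous_eval (g i)))
      (isClosed_iInter fun j => isClosed_eq (MvPolynomial.continuous_eval (h j)) continuous_const)
  obtain ⟨N₀, hballmem⟩ := hball
  have hDsub : D ⊆ Metric.closedBall 0 (Real.sqrt (max N₀ 0)) := by
    intro u hu
    have h1 : 0 ≤ eval u (C N₀ - ∑ j : Fin k, X j ^ 2) :=
      eval_Mset_nonneg g h hballmem hu.1 hu.2
    have h2 : ∑ j : Fin k, u j ^ 2 ≤ N₀ := by
      simpa [sub_nonneg] using h1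
    rw [Metric.mem_closedBall, dist_pi_le_iff (Real.sqrt_nonneg _)]
    intro i
    simp only [Pi.zero_apply, Real.dist_0_eq_abs]
    apply Real.abs_le_sqrt
    calc u i ^ 2 ≤ ∑ j : Fin k, u j ^ 2 :=
          Finset.single_le_sum (fun j _ => sq_nonneg (u j)) (Finset.mem_univ i)
      _ ≤ N₀ := h2
      _ ≤ max N₀ 0 := le_max_left _ _
  have hDcpt : IsCompact D :=
    (isCompact_closedBall _ _).of_isClosed_subset hDclosed hDsub
  -- a uniform positive lower bound
  obtain ⟨ε, hεpos, hεlb⟩ : ∃ ε : ℝ, 0 < ε ∧ ∀ u ∈ D, ε < eval u f := by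
    rcases D.eq_empty_or_nonempty with hDe | hDne
    · exact ⟨1, one_pos, fun u hu => by rw [hDe] at hu; exact absurd hu (Set.notMem_empty u)⟩
    · obtain ⟨u₀, hu₀D, hmin⟩ := hDcpt.exists_isMinOn hDne
        (MvPolynomial.continuous_eval f).continuousOn
      have hpos : 0 < eval u₀ f := hf u₀ hu₀D.1 hu₀D.2
      refine ⟨eval u₀ f / 2, by linarith, fun u hu => ?_⟩
      have := hmin hu
      simp only [Set.mem_setOf_eq] at this
      calc eval u₀ f / 2 < eval u₀ f := by linarith
        _ ≤ eval u f := this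
  set f' := f - C ε with hf'
  by_cases hcase : ∃ σ q : A k, IsSOS σ ∧ q ∈ Mset g h ∧ σ * f' = 1 + q
  · obtain ⟨σ, q, hσ, hq, hrel⟩ := hcase
    have hmem := eps_mem hMqm ⟨N₀, hballmem⟩ hσ hq hrel hεpos
    rwa [hf', sub_add_cancel] at hmem
  · -- extend M - Σ²·f' to a maximal proper quadratic module
    set M' : Set (A k) := {x | ∃ q ∈ Mset g h, ∃ σ, IsSOS σ ∧ x = q + σ * (-f')} with hM'
    have hM'qm : IsQM M' := mem_Mset_gen g h (-f')
    have hMM' : Mset g h ⊆ M' := fun x hx => ⟨x, hx, 0, isSOS_zero, by ring⟩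
    have hfM' : -f' ∈ M' := ⟨0, hMqm.zero_mem, 1, isSOS_one, by ring⟩
    have hM'p : (-1 : A k) ∉ M' := by
      rintro ⟨q, hq, σ, hσ, hid⟩
      exact hcase ⟨σ, q, hσ, hq, by linear_combination hid⟩
    obtain ⟨Q, hQqm, hM'Q, hQp, hQmax⟩ := exists_maximal_proper hM'qm hM'p
    have hsemi := maximal_semiordering hQqm hQp hQmax
    have hMQ : Mset g h ⊆ Q := fun x hx => hM'Q (hMM' hx)
    have hballQ : ∃ N₁ : ℝ, C N₁ - ∑ j : Fin k, X j ^ 2 ∈ Q := ⟨N₀, hMQ hballmem⟩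
    set u : Fin k → ℝ := fun i => alph Q (X i) with hu
    have haev : ∀ p : A k, alph Q p = eval u p := alph_eval hQqm hQp hsemi hballQ
    have hgu : ∀ i, 0 ≤ eval u (g i) := fun i => by
      rw [← haev]
      exact alph_nonneg_of_mem hQqm hQp hballQ (hMQ (g_mem_Mset g h i))
    have hhu : ∀ j, eval u (h j) = 0 := by
      intro j
      have h1 : 0 ≤ alph Q (h j) :=
        alph_nonneg_of_mem hQqm hQp hballQ (hMQ (h_mem_Mset g h j))
      have h2 : 0 ≤ alph Q (-(h j)) :=
        alph_nonneg_of_mem hQqm hQp hballQ (hMQ (neg_h_mem_Mset g h j))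
      rw [alph_neg hQqm hQp hsemi hballQ] at h2
      rw [← haev]
      linarith
    have huD : u ∈ D := ⟨hgu, hhu⟩
    exfalso
    have h3 : 0 ≤ alph Q (-f') := alph_nonneg_of_mem hQqm hQp hballQ (hM'Q hfM')
    rw [alph_neg hQqm hQp hsemi hballQ] at h3
    have h4 : alph Q f = alph Q f' + ε := by
      have h40 := alph_add hQqm hQp hsemi hballQ f' (C ε)
      rw [alph_const hQqm hQp hballQ] at h40
      have e : f' + C ε = f := by rw [hf']; ring
      rw [e] at h40
      exact h40
    have h5 : eval u f ≤ ε := by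
      rw [← haev]
      linarith
    exact absurd (hεlb u huD) (not_lt.mpr h5)

end Main
end Putinar

/-- Putinar's Positivstellensatz extended to domains with equality constraints. -/
theorem putinar_with_equalities {k m n : ℕ}
    (g : Fin m → MvPolynomial (Fin k) ℝ) (h : Fin n → MvPolynomial (Fin k) ℝ)
    (harch : ∃ (N : ℝ) (s₀ : MvPolynomial (Fin k) ℝ)
        (s : Fin m → MvPolynomial (Fin k) ℝ) (q : Fin n → MvPolynomial (Fin k) ℝ),
      IsSOS s₀ ∧ (∀ i, IsSOS (s i)) ∧
      C N - ∑ j : Fin k, X j ^ 2 = s₀ + ∑ i, s i * g i + ∑ j, q j * h j)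
    (f : MvPolynomial (Fin k) ℝ)
    (hf : ∀ u : Fin k → ℝ, (∀ i, 0 ≤ eval u (g i)) → (∀ j, eval u (h j) = 0) →
      0 < eval u f) :
    ∃ (s₀ : MvPolynomial (Fin k) ℝ) (s : Fin m → MvPolynomial (Fin k) ℝ)
      (p : Fin n → MvPolynomial (Fin k) ℝ),
      IsSOS s₀ ∧ (∀ i, IsSOS (s i)) ∧
      f = s₀ + ∑ i, s i * g i + ∑ j, p j * h j := by
  obtain ⟨N, s₀, s, q, hs₀, hs, hid⟩ := harch
  have hball : ∃ N₀ : ℝ, C N₀ - ∑ j : Fin k, X j ^ 2 ∈ Putinar.Mset g h :=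
    ⟨N, s₀, s, q, hs₀, hs, hid⟩
  obtain ⟨t₀, t, p', h1, h2, h3⟩ := Putinar.main_mem g h hball f hf
  exact ⟨t₀, t, p', h1, h2, h3⟩
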